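/- In a field, let $n, s, w$ be nonzero elements with $s \ne 1$, and let $b_1, b_1', b_2$ be elements satisfying the constraint $(1 - s^{-1}) b_1' + (w - 1) b_1 = s^{-1}(n^{-1} - 1)$. Then $b_1 - b_1 b_2 + b_1' b_2 = b_1 + \frac{1 - n^{-1}}{1 - s}\, b_2 + \frac{s^{-1} - w}{1 - s^{-1}}\, b_1 b_2$. -/

import Mathlib

theorem vertical_composition_formula {K : Type*} [Field K] (n s w : K)
    (hn : n ≠ 0) (hs : s ≠ 0) (hw : w ≠ 0) (hs1 : s ≠ 1) (b₁ b₁' b₂ : K)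
    (hconstraint : (1 - s⁻¹) * b₁' + (w - 1) * b₁ = s⁻¹ * (n⁻¹ - 1)) :
    b₁ - b₁ * b₂ + b₁' * b₂
      = b₁ + (1 - n⁻¹) / (1 - s) * b₂ + (s⁻¹ - w) / (1 - s⁻¹) * (b₁ * b₂) := by
  have h1 : (1 : K) - s ≠ 0 := sub_ne_zero.mpr (fun h => hs1 h.symm)
  have h3 : s - 1 ≠ 0 := sub_ne_zero.mpr hs1
  have h2 : (1 : K) - s⁻¹ ≠ 0 := by
    rw [sub_ne_zero]; intro h; apply hs1; rw [← inv_inv s, ← h, inv_one]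
  field_simp at hconstraint ⊢
  have hc2 : ((s - 1) * b₁' + (w - 1) * b₁ * s) * n = 1 - n :=
    mul_right_cancel₀ hs (by linear_combination s * hconstraint)
  linear_combination (-b₂ * (s - 1)) * hc2
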